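/- Let φ : ℝ → ℝ be four times continuously differentiable with sup_x φ''(x) − inf_x φ''(x) ≤ B and |φ''''(x)| ≤ K4 for all x, and let β > 0, μ0, δr ∈ ℝ satisfy β + φ''(μ0) − B > 0. Assume the regularity needed for the hybrid h to be a well-defined probability measure with finite variance v_h > 0 and for the boundary terms in integration by parts to vanish. Then the site precision β_site := v_h⁻¹ − β satisfies the upper bound β_site ≤ φ''(μ_h) + (K4/2)·(β + φ''(μ0) − B)⁻¹. -/

import Mathlib

open MeasureTheory Real Filter

noncomputable section

open Set NNReal
lemma aux_mvt_ge {g g' : ℝ → ℝ} (hg : ∀ x, HasDerivAt g (g' x) x) {c : ℝ}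
    (hc : ∀ x, c ≤ g' x) {y x : ℝ} (hyx : y ≤ x) : c * (x - y) ≤ g x - g y := by
  rcases eq_or_lt_of_le hyx with rfl | h
  · simp
  · obtain ⟨ξ, _, hslope⟩ := exists_hasDerivAt_eq_slope g g' h
      (fun z _ => (hg z).continuousAt.continuousWithinAt) (fun z _ => hg z)
    have h1 : c ≤ (g x - g y) / (x - y) := hslope ▸ hc ξ
    have hpos : (0:ℝ) < x - y := by linarith
    calc c * (x - y) ≤ ((g x - g y) / (x - y)) * (x - y) :=
          mul_le_mul_of_nonneg_right h1 hpos.le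
      _ = g x - g y := by field_simp

lemma aux_taylor2 {g g' g'' : ℝ → ℝ} (hg : ∀ x, HasDerivAt g (g' x) x)
    (hg' : ∀ x, HasDerivAt g' (g'' x) x) {K : ℝ} (hK : ∀ x, g'' x ≤ K) (μ x : ℝ) :
    g x ≤ g μ + g' μ * (x - μ) + K / 2 * (x - μ) ^ 2 := by
  set q : ℝ → ℝ := fun z => g μ + g' μ * (z - μ) + K / 2 * (z - μ) ^ 2 - g z with hqdef
  set q' : ℝ → ℝ := fun z => g' μ + K * (z - μ) - g' z with hq'def
  have hq : ∀ z, HasDerivAt q (q' z) z := by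
    intro z
    have h1 : HasDerivAt (fun z : ℝ => (z - μ)) 1 z := (hasDerivAt_id z).sub_const μ
    have h2 := (((h1.const_mul (g' μ)).const_add (g μ)).add ((h1.pow 2).const_mul (K / 2))).sub
      (hg z)
    refine h2.congr_deriv ?_
    ring
  have hq'' : ∀ z, HasDerivAt q' (K - g'' z) z := by
    intro z
    have h1 : HasDerivAt (fun z : ℝ => (z - μ)) 1 z := (hasDerivAt_id z).sub_const μ
    have h2 := ((h1.const_mul K).const_add (g' μ)).sub (hg' z)
    refine h2.congr_deriv ?_
    ring
  have hq'mono : ∀ ⦃a b : ℝ⦄, a ≤ b → q' a ≤ q' b := by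
    intro a b hab
    have := aux_mvt_ge hq'' (c := 0) (fun z => by linarith [hK z]) hab
    linarith
  have hq'μ : q' μ = 0 := by simp [hq'def]
  have hqnonneg : 0 ≤ q x := by
    rcases lt_trichotomy x μ with hx | rfl | hx
    · obtain ⟨ξ, hξ, hslope⟩ := exists_hasDerivAt_eq_slope q q' hx
        (fun z _ => (hq z).continuousAt.continuousWithinAt) (fun z _ => hq z)
      have h1 : q' ξ ≤ 0 := by
        have := hq'mono (le_of_lt hξ.2); linarith [hq'μ]
      have hpos : (0:ℝ) < μ - x := by linarith
      have hle : (q μ - q x) / (μ - x) ≤ 0 := hslope ▸ h1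
      have h2 : q μ - q x ≤ 0 := by
        by_contra hcon
        push_neg at hcon
        exact absurd hle (not_le.2 (div_pos hcon hpos))
      have hqμ : q μ = 0 := by simp [hqdef]
      linarith
    · simp [hqdef]
    · obtain ⟨ξ, hξ, hslope⟩ := exists_hasDerivAt_eq_slope q q' hx
        (fun z _ => (hq z).continuousAt.continuousWithinAt) (fun z _ => hq z)
      have h1 : 0 ≤ q' ξ := by
        have := hq'mono (le_of_lt hξ.1); linarith [hq'μ]
      have hpos : (0:ℝ) < x - μ := by linarith
      have h2 : 0 ≤ (q x - q μ) / (x - μ) := hslope ▸ h1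
      have hqμ : q μ = 0 := by simp [hqdef]
      have h3 : 0 ≤ q x - q μ :=
        ((div_nonneg_iff.mp h2).resolve_right (fun hh => absurd hh.2 (not_le.2 hpos))).1
      linarith
  simp only [hqdef] at hqnonneg
  linarith


/-- Unnormalized density of the hybrid distribution:
`l(x) · exp(−(β/2)x² + (β μ0 − δr)x)` with `l = exp (−φ)`. -/
def hybridDens (φ : ℝ → ℝ) (β μ0 δr : ℝ) (x : ℝ) : ℝ :=
  Real.exp (-(φ x) - β / 2 * x ^ 2 + (β * μ0 - δr) * x)

/-- The hybrid distribution: the normalized measure with density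
proportional to `hybridDens`. -/
def hybrid (φ : ℝ → ℝ) (β μ0 δr : ℝ) : Measure ℝ :=
  ((volume.withDensity fun x => ENNReal.ofReal (hybridDens φ β μ0 δr x)) Set.univ)⁻¹ •
    (volume.withDensity fun x => ENNReal.ofReal (hybridDens φ β μ0 δr x))

/-- Mean of the hybrid distribution. -/
def hybridMean (φ : ℝ → ℝ) (β μ0 δr : ℝ) : ℝ :=
  ∫ x, x ∂(hybrid φ β μ0 δr)

/-- Variance of the hybrid distribution. -/
def hybridVar (φ : ℝ → ℝ) (β μ0 δr : ℝ) : ℝ :=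
  ∫ x, (x - hybridMean φ β μ0 δr) ^ 2 ∂(hybrid φ β μ0 δr)

/-- Cramér–Rao upper bound on the site precision.  If `φ` is C⁴ with
`sup φ'' − inf φ'' ≤ B`, `|φ''''| ≤ K4`, `β + φ''(μ0) − B > 0`, and the hybrid is a
well-defined probability measure with finite variance `v_h > 0` with the regularity
needed for integration by parts (the unnormalized density and its score-weighted
version vanish at `±∞`, with the relevant integrands `h`-integrable), then
`β_site := v_h⁻¹ − β ≤ φ''(μ_h) + (K4/2)·(β + φ''(μ0) − B)⁻¹`. -/
theorem site_precision_upper_bound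
    (φ : ℝ → ℝ) (B K4 : ℝ) (hφ : ContDiff ℝ 4 φ)
    (hB : ∀ x y, iteratedDeriv 2 φ x - iteratedDeriv 2 φ y ≤ B)
    (hK4 : ∀ x, |iteratedDeriv 4 φ x| ≤ K4)
    (β μ0 δr : ℝ) (hβ : 0 < β)
    (hpos : 0 < β + iteratedDeriv 2 φ μ0 - B)
    (hprob : IsProbabilityMeasure (hybrid φ β μ0 δr))
    (hm1 : Integrable (fun x => x) (hybrid φ β μ0 δr))
    (hm2 : Integrable (fun x => x ^ 2) (hybrid φ β μ0 δr))
    (hvar : 0 < hybridVar φ β μ0 δr)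
    (hscore2 : Integrable
      (fun x => (deriv φ x + β * x - (β * μ0 - δr)) ^ 2) (hybrid φ β μ0 δr))
    (hcurv : Integrable (fun x => iteratedDeriv 2 φ x) (hybrid φ β μ0 δr))
    (htop0 : Tendsto (fun x => hybridDens φ β μ0 δr x) atTop (nhds 0))
    (hbot0 : Tendsto (fun x => hybridDens φ β μ0 δr x) atBot (nhds 0))
    (htop1 : Tendsto
      (fun x => (deriv φ x + β * x - (β * μ0 - δr)) * hybridDens φ β μ0 δr x)
      atTop (nhds 0))
    (hbot1 : Tendsto
      (fun x => (deriv φ x + β * x - (β * μ0 - δr)) * hybridDens φ β μ0 δr x)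
      atBot (nhds 0)) :
    (hybridVar φ β μ0 δr)⁻¹ - β ≤
      iteratedDeriv 2 φ (hybridMean φ β μ0 δr) +
        K4 / 2 * (β + iteratedDeriv 2 φ μ0 - B)⁻¹ := by
  haveI := hprob
  -- abbreviations
  set ρ : ℝ → ℝ := hybridDens φ β μ0 δr with hρdef
  set h : Measure ℝ := hybrid φ β μ0 δr with hhdef
  set μh : ℝ := hybridMean φ β μ0 δr with hμdef
  set v : ℝ := hybridVar φ β μ0 δr with hvdef
  set c0 : ℝ := β + iteratedDeriv 2 φ μ0 - B with hc0def
  set s : ℝ → ℝ := fun x => deriv φ x + β * x - (β * μ0 - δr) with hsdef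
  -- smoothness infrastructure
  have c3 : ContDiff ℝ 3 (deriv φ) :=
    (contDiff_succ_iff_deriv.mp (hφ.of_le (by norm_num : ((3:WithTop ℕ∞) + 1) ≤ 4))).2.2
  have c2 : ContDiff ℝ 2 (deriv (deriv φ)) :=
    (contDiff_succ_iff_deriv.mp (c3.of_le (by norm_num : ((2:WithTop ℕ∞) + 1) ≤ 3))).2.2
  have c1 : ContDiff ℝ 1 (deriv (deriv (deriv φ))) :=
    (contDiff_succ_iff_deriv.mp (c2.of_le (by norm_num : ((1:WithTop ℕ∞) + 1) ≤ 2))).2.2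
  have hdφ : Differentiable ℝ φ := hφ.differentiable (by norm_num)
  have hd1 : Differentiable ℝ (deriv φ) := c3.differentiable (by norm_num)
  have hd2 : Differentiable ℝ (deriv (deriv φ)) := c2.differentiable (by norm_num)
  have hd3 : Differentiable ℝ (deriv (deriv (deriv φ))) := c1.differentiable (by norm_num)
  have hc1 : Continuous (deriv φ) := c3.continuous
  have hi2 : iteratedDeriv 2 φ = deriv (deriv φ) := by
    rw [show (2:ℕ) = 1 + 1 from rfl, iteratedDeriv_succ, iteratedDeriv_one]
  have hi4 : iteratedDeriv 4 φ = deriv (deriv (deriv (deriv φ))) := by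
    rw [show (4:ℕ) = 3 + 1 from rfl, iteratedDeriv_succ,
      show (3:ℕ) = 2 + 1 from rfl, iteratedDeriv_succ, hi2]
  rw [hi2] at hc0def hB hcurv ⊢
  rw [hi4] at hK4
  -- score facts
  have hscont : Continuous s := by
    rw [hsdef]
    exact (hc1.add (continuous_const.mul continuous_id)).sub continuous_const
  have hs' : ∀ x, HasDerivAt s (deriv (deriv φ) x + β) x := by
    intro x
    have h2 := ((hd1 x).hasDerivAt.add ((hasDerivAt_id x).const_mul β)).sub_const (β * μ0 - δr)
    exact h2.congr_deriv (by ring)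
  have hsc0 : ∀ x, c0 ≤ deriv (deriv φ) x + β := by
    intro x
    have := hB μ0 x
    rw [hc0def]; linarith
  have hslip : ∀ ⦃y x : ℝ⦄, y ≤ x → c0 * (x - y) ≤ s x - s y :=
    fun y x hyx => aux_mvt_ge hs' hsc0 hyx
  -- density facts
  have hρpos : ∀ x, 0 < ρ x := fun x => Real.exp_pos _
  have hρcont : Continuous ρ := by
    rw [hρdef]
    unfold hybridDens
    fun_prop
  have hρ' : ∀ x, HasDerivAt ρ (-s x * ρ x) x := by
    intro x
    have hg0 : HasDerivAt (fun y : ℝ => -(φ y) - β / 2 * y ^ 2 + (β * μ0 - δr) * y) (-s x) x := by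
      have h1 := (hdφ x).hasDerivAt.neg
      have h2 := ((hasDerivAt_id x).pow 2).const_mul (β / 2)
      have h3 := (hasDerivAt_id x).const_mul (β * μ0 - δr)
      have h4 := (h1.sub h2).add h3
      refine h4.congr_deriv ?_
      rw [hsdef]; simp; ring
    have h5 := hg0.exp
    have h6 : HasDerivAt ρ (ρ x * -s x) x := h5
    exact h6.congr_deriv (mul_comm _ _)
  -- measure conversion
  set ν : Measure ℝ := volume.withDensity (fun x => ENNReal.ofReal (ρ x)) with hνdef
  have hh : h = (ν Set.univ)⁻¹ • ν := rfl
  have h1 : (ν Set.univ)⁻¹ * ν Set.univ = 1 := by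
    have h2 := hprob.measure_univ
    rw [hh] at h2
    simpa [Measure.smul_apply, smul_eq_mul] using h2
  have hne0 : ν Set.univ ≠ 0 := by intro h0; rw [h0] at h1; simp at h1
  have hnetop : ν Set.univ ≠ ⊤ := by intro h0; rw [h0] at h1; simp at h1
  set Z : ℝ := (ν Set.univ).toReal with hZdef
  have hZpos : 0 < Z := ENNReal.toReal_pos hne0 hnetop
  have hmeasNN : Measurable fun x => (ρ x).toNNReal := hρcont.measurable.real_toNNReal
  have hνNN : ν = volume.withDensity (fun x => ((ρ x).toNNReal : ENNReal)) := rfl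
  have key_int : ∀ f : ℝ → ℝ, Integrable f h ↔ Integrable (fun x => ρ x * f x) volume := by
    intro f
    rw [hh, integrable_smul_measure (ENNReal.inv_ne_zero.mpr hnetop)
      (ENNReal.inv_ne_top.mpr hne0), hνNN, integrable_withDensity_iff_integrable_smul hmeasNN]
    have he : (fun x => (ρ x).toNNReal • f x) = fun x => ρ x * f x := by
      funext x
      simp [NNReal.smul_def, Real.coe_toNNReal _ (hρpos x).le]
    rw [he]
  have key_eq : ∀ f : ℝ → ℝ, ∫ x, f x ∂h = Z⁻¹ * ∫ x, ρ x * f x := by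
    intro f
    rw [hh, integral_smul_measure, hνNN, integral_withDensity_eq_integral_smul hmeasNN]
    have he : (fun x => (ρ x).toNNReal • f x) = fun x => ρ x * f x := by
      funext x
      simp [NNReal.smul_def, Real.coe_toNNReal _ (hρpos x).le]
    rw [he, ENNReal.toReal_inv, smul_eq_mul]
    rfl
  -- basic integrals
  have hint_one : ∫ x, (1:ℝ) ∂h = 1 := by simp
  have hρint_eq : ∫ x, ρ x = Z := by
    have h2 := key_eq (fun _ => (1:ℝ))
    rw [hint_one] at h2
    simp only [mul_one] at h2
    exact ((inv_mul_eq_one₀ hZpos.ne').mp h2.symm).symm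
  have int_ρ : Integrable ρ volume := by
    have h2 := (key_int fun _ => (1:ℝ)).mp (integrable_const 1)
    simpa using h2
  have hs2 : Integrable (fun x => s x ^ 2) h := hscore2
  have int_ρs2 : Integrable (fun x => ρ x * s x ^ 2) volume := (key_int _).mp hs2
  have int_ρD2 : Integrable (fun x => ρ x * deriv (deriv φ) x) volume := (key_int _).mp hcurv
  -- h-integrabilities
  have hint_xm : Integrable (fun x => x - μh) h := hm1.sub (integrable_const μh)
  have hint_xm2 : Integrable (fun x => (x - μh) ^ 2) h := by
    have he : (fun x : ℝ => (x - μh) ^ 2) = fun x => x ^ 2 - 2 * μh * x + μh ^ 2 := by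
      funext x; ring
    rw [he]
    exact (hm2.sub (hm1.const_mul (2 * μh))).add (integrable_const _)
  have hsint : Integrable s h := by
    apply Integrable.mono (hs2.add (integrable_const 1)) hscont.aestronglyMeasurable
    filter_upwards with x
    simp only [Real.norm_eq_abs]
    have h2 : |s x| ≤ s x ^ 2 + 1 := by
      nlinarith [sq_abs (s x), sq_nonneg (|s x| - 1), abs_nonneg (s x)]
    exact h2.trans (le_abs_self _)
  have hint_xms : Integrable (fun x => (x - μh) * s x) h := by
    apply Integrable.mono (hint_xm2.add hs2)
      (((continuous_id.sub continuous_const).mul hscont).aestronglyMeasurable)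
    filter_upwards with x
    simp only [Real.norm_eq_abs]
    simp only [Pi.mul_apply, Pi.add_apply, Pi.sub_apply, id_eq]
    rw [abs_mul]
    have h2 : |x - μh| * |s x| ≤ (x - μh) ^ 2 + s x ^ 2 := by
      nlinarith [sq_nonneg (|x - μh| - |s x|), sq_abs (x - μh), sq_abs (s x),
        mul_nonneg (abs_nonneg (x - μh)) (abs_nonneg (s x))]
    exact h2.trans (le_abs_self _)
  have int_xmsρ : Integrable (fun x => ρ x * ((x - μh) * s x)) volume := (key_int _).mp hint_xms
  -- mean facts
  have hμ_eq : ∫ x, x ∂h = μh := rfl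
  have E0 : ∫ x, (x - μh) ∂h = 0 := by
    rw [integral_sub hm1 (integrable_const _), hμ_eq, integral_const]
    simp
  have v_eq : ∫ x, (x - μh) ^ 2 ∂h = v := rfl
  -- integration by parts 1 : covariance identity
  have hFx : ∀ x, HasDerivAt (fun y => (y - μh) * ρ y) (ρ x - ρ x * ((x - μh) * s x)) x := by
    intro x
    have h2 := ((hasDerivAt_id x).sub_const μh).mul (hρ' x)
    refine h2.congr_deriv ?_
    simp only [id_eq]
    ring
  have intF2 : Integrable (fun x => ρ x - ρ x * ((x - μh) * s x)) volume := int_ρ.sub int_xmsρ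
  have habs : ∀ x, |x - μh| ≤ c0⁻¹ * (|s x| + |s μh|) := by
    intro x
    have hkey : c0 * |x - μh| ≤ |s x| + |s μh| := by
      rcases le_total μh x with hx | hx
      · have h2 := hslip hx
        have h3 : |x - μh| = x - μh := abs_of_nonneg (by linarith)
        have h4 := le_abs_self (s x - s μh)
        have h5 : |s x - s μh| ≤ |s x| + |s μh| :=
          (sub_eq_add_neg (s x) (s μh) ▸ abs_add_le (s x) (-(s μh))).trans_eq (by rw [abs_neg])
        rw [h3]; linarith
      · have h2 := hslip hx
        have h3 : |x - μh| = μh - x := by rw [abs_sub_comm]; exact abs_of_nonneg (by linarith)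
        have h4 := le_abs_self (s μh - s x)
        have h5 : |s μh - s x| ≤ |s μh| + |s x| :=
          (sub_eq_add_neg (s μh) (s x) ▸ abs_add_le (s μh) (-(s x))).trans_eq (by rw [abs_neg])
        rw [h3]; linarith
    calc |x - μh| = c0⁻¹ * (c0 * |x - μh|) := by field_simp
      _ ≤ c0⁻¹ * (|s x| + |s μh|) := mul_le_mul_of_nonneg_left hkey (inv_nonneg.mpr hpos.le)
  have hFbd : ∀ x, ‖(x - μh) * ρ x‖ ≤ c0⁻¹ * (|s x * ρ x| + |s μh| * ρ x) := by
    intro x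
    rw [Real.norm_eq_abs, abs_mul, abs_of_pos (hρpos x)]
    calc |x - μh| * ρ x ≤ (c0⁻¹ * (|s x| + |s μh|)) * ρ x :=
          mul_le_mul_of_nonneg_right (habs x) (hρpos x).le
      _ = c0⁻¹ * (|s x| * ρ x + |s μh| * ρ x) := by ring
      _ = c0⁻¹ * (|s x * ρ x| + |s μh| * ρ x) := by rw [abs_mul, abs_of_pos (hρpos x)]
  have hFlim_top : Tendsto (fun x => (x - μh) * ρ x) atTop (nhds 0) := by
    apply squeeze_zero_norm hFbd
    have h2 := ((htop1.abs).add (htop0.const_mul (|s μh|))).const_mul c0⁻¹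
    simpa using h2
  have hFlim_bot : Tendsto (fun x => (x - μh) * ρ x) atBot (nhds 0) := by
    apply squeeze_zero_norm hFbd
    have h2 := ((hbot1.abs).add (hbot0.const_mul (|s μh|))).const_mul c0⁻¹
    simpa using h2
  have S2 := integral_of_hasDerivAt_of_tendsto hFx intF2 hFlim_bot hFlim_top
  rw [sub_zero] at S2
  rw [integral_sub int_ρ int_xmsρ] at S2
  have S2' : ∫ x, ρ x * ((x - μh) * s x) = Z := by linarith [hρint_eq]
  have A2 : ∫ x, (x - μh) * s x ∂h = 1 := by
    rw [key_eq, S2']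
    field_simp
  -- integration by parts 2 : Fisher information identity
  have hGx : ∀ x, HasDerivAt (fun y => s y * ρ y)
      ((ρ x * deriv (deriv φ) x + β * ρ x) - ρ x * s x ^ 2) x := by
    intro x
    exact ((hs' x).mul (hρ' x)).congr_deriv (by ring)
  have intA : Integrable (fun x => ρ x * deriv (deriv φ) x + β * ρ x) volume :=
    int_ρD2.add (int_ρ.const_mul β)
  have intG : Integrable (fun x => (ρ x * deriv (deriv φ) x + β * ρ x) - ρ x * s x ^ 2) volume :=
    intA.sub int_ρs2
  have S3 := integral_of_hasDerivAt_of_tendsto hGx intG hbot1 htop1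
  rw [sub_zero] at S3
  rw [integral_sub intA int_ρs2,
    integral_add int_ρD2 (int_ρ.const_mul β), integral_const_mul, hρint_eq] at S3
  have A3 : ∫ x, s x ^ 2 ∂h = (∫ x, deriv (deriv φ) x ∂h) + β := by
    rw [key_eq (fun x => s x ^ 2), key_eq (fun x => deriv (deriv φ) x)]
    have h2 : ∫ x, ρ x * s x ^ 2 = (∫ x, ρ x * deriv (deriv φ) x) + β * Z := by linarith
    rw [h2]
    field_simp
  -- Cauchy-Schwarz : v⁻¹ ≤ Fisher information
  have hCS : 1 ≤ v * ∫ x, s x ^ 2 ∂h := by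
    have hpt : ∀ x, 2 * ((x - μh) * s x) ≤ v⁻¹ * (x - μh) ^ 2 + v * s x ^ 2 := by
      intro x
      have h2 : v⁻¹ * (x - μh) ^ 2 + v * s x ^ 2 - 2 * ((x - μh) * s x)
          = v⁻¹ * ((x - μh) - v * s x) ^ 2 := by
        field_simp
        ring
      have h3 : 0 ≤ v⁻¹ * ((x - μh) - v * s x) ^ 2 :=
        mul_nonneg (inv_nonneg.mpr hvar.le) (sq_nonneg _)
      linarith
    have hRint : Integrable (fun x => v⁻¹ * (x - μh) ^ 2 + v * s x ^ 2) h :=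
      (hint_xm2.const_mul v⁻¹).add (hs2.const_mul v)
    have h3 := integral_mono (hint_xms.const_mul 2) hRint hpt
    rw [integral_const_mul, A2, integral_add (hint_xm2.const_mul v⁻¹) (hs2.const_mul v),
      integral_const_mul, integral_const_mul, v_eq, inv_mul_cancel₀ hvar.ne'] at h3
    linarith
  have hvinv : v⁻¹ ≤ ∫ x, s x ^ 2 ∂h := by
    have h2 := mul_le_mul_of_nonneg_left hCS (inv_nonneg.mpr hvar.le)
    rw [mul_one, ← mul_assoc, inv_mul_cancel₀ hvar.ne', one_mul] at h2
    exact h2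
  -- Brascamp-Lieb type bound : v ≤ c0⁻¹
  have hptF : ∀ x, c0 * (x - μh) ^ 2 ≤ (x - μh) * (s x - s μh) := by
    intro x
    rcases le_total μh x with hx | hx
    · have h2 := hslip hx
      have h3 : (0:ℝ) ≤ x - μh := sub_nonneg.mpr hx
      calc c0 * (x - μh) ^ 2 = (x - μh) * (c0 * (x - μh)) := by ring
        _ ≤ (x - μh) * (s x - s μh) := mul_le_mul_of_nonneg_left h2 h3
    · have h2 := hslip hx
      have h3 : (0:ℝ) ≤ μh - x := sub_nonneg.mpr hx
      calc c0 * (x - μh) ^ 2 = (μh - x) * (c0 * (μh - x)) := by ring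
        _ ≤ (μh - x) * (s μh - s x) := mul_le_mul_of_nonneg_left h2 h3
        _ = (x - μh) * (s x - s μh) := by ring
  have hint_xmssub : Integrable (fun x => (x - μh) * (s x - s μh)) h := by
    have he : (fun x => (x - μh) * (s x - s μh)) = fun x => (x - μh) * s x - s μh * (x - μh) := by
      funext x; ring
    rw [he]
    exact hint_xms.sub (hint_xm.const_mul _)
  have hR : ∫ x, (x - μh) * (s x - s μh) ∂h = 1 := by
    have he : (fun x => (x - μh) * (s x - s μh)) = fun x => (x - μh) * s x - s μh * (x - μh) := by
      funext x; ring
    rw [he, integral_sub hint_xms (hint_xm.const_mul _), A2, integral_const_mul, E0]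
    ring
  have h4 := integral_mono (hint_xm2.const_mul c0) hint_xmssub hptF
  rw [integral_const_mul, v_eq, hR] at h4
  have hvc0 : v ≤ c0⁻¹ := by
    rw [← one_div, le_div_iff₀ hpos]
    linarith
  -- Taylor bound on curvature
  have hK4' : ∀ x, deriv (deriv (deriv (deriv φ))) x ≤ K4 := fun x => (abs_le.mp (hK4 x)).2
  have hptT : ∀ x, deriv (deriv φ) x ≤ deriv (deriv φ) μh
      + deriv (deriv (deriv φ)) μh * (x - μh) + K4 / 2 * (x - μh) ^ 2 :=
    fun x => aux_taylor2 (fun z => (hd2 z).hasDerivAt) (fun z => (hd3 z).hasDerivAt) hK4' μh x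
  have hT1 : Integrable (fun x => deriv (deriv φ) μh
      + deriv (deriv (deriv φ)) μh * (x - μh)) h :=
    (integrable_const _).add (hint_xm.const_mul _)
  have hintT : Integrable (fun x => deriv (deriv φ) μh
      + deriv (deriv (deriv φ)) μh * (x - μh) + K4 / 2 * (x - μh) ^ 2) h :=
    hT1.add (hint_xm2.const_mul _)
  have h5 := integral_mono hcurv hintT hptT
  rw [integral_add hT1 (hint_xm2.const_mul _),
    integral_add (integrable_const _) (hint_xm.const_mul _), integral_const,
    integral_const_mul, integral_const_mul, E0, v_eq] at h5
  simp only [measure_univ, probReal_univ, ENNReal.toReal_one, one_smul, mul_zero, add_zero] at h5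
  have K4nn : (0:ℝ) ≤ K4 := le_trans (abs_nonneg _) (hK4 0)
  have hfinal3 : K4 / 2 * v ≤ K4 / 2 * c0⁻¹ :=
    mul_le_mul_of_nonneg_left hvc0 (by positivity)
  linarith
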